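/- Let α > 1 and let (r_n), (p_n) be positive sequences such that for all sufficiently large k: r_k ≤ k^{−(α−δ)} and p_k ≥ k^{−(1+δ)}, where 0 < δ < min{1/3, (α−1)/(α+1)}. Then for every 0 < η < 1/2 there exists k_0 such that for all k ≥ k_0 and all n ∈ ℕ, (log ∑_{m=k}^{n+k} p_m) / (log ∑_{m=k−1}^{n+k+1} r_m) ≤ (1+δ)/(α−δ) + η. -/

import Mathlib

open Filter

lemma bern_aux {s x : ℝ} (hs : 1 < s) (hx : 1 < x) :
    (s - 1) * x ^ (-s) ≤ (x - 1) ^ (1 - s) - x ^ (1 - s) := by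
  have hx0 : (0:ℝ) < x := by linarith
  have hx1 : (0:ℝ) < x - 1 := by linarith
  have hw : (0:ℝ) < (x - 1) / x := by positivity
  have hwp : (0:ℝ) < ((x - 1) / x) ^ (s - 1) := Real.rpow_pos_of_pos hw _
  -- key : (1 + (s-1)/x) * ((x-1)/x) ^ (s-1) ≤ 1
  have h1 : 1 + (s - 1) / x ≤ Real.exp ((s - 1) / x) := by
    have := Real.add_one_le_exp ((s - 1) / x); linarith
  have h2 : ((x - 1) / x) ^ (s - 1) ≤ Real.exp (-((s - 1) / x)) := by
    rw [Real.rpow_def_of_pos hw]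
    apply Real.exp_le_exp.mpr
    have hlog : Real.log ((x - 1) / x) ≤ -(1 / x) := by
      have h := Real.log_le_sub_one_of_pos hw
      have : (x - 1) / x - 1 = -(1 / x) := by field_simp; ring
      linarith
    have := mul_le_mul_of_nonneg_right hlog (by linarith : (0:ℝ) ≤ s - 1)
    calc Real.log ((x - 1) / x) * (s - 1) ≤ -(1 / x) * (s - 1) := this
      _ = -((s - 1) / x) := by ring
  have key : (1 + (s - 1) / x) * ((x - 1) / x) ^ (s - 1) ≤ 1 := by
    have hnn : (0:ℝ) ≤ 1 + (s - 1) / x := by have : (0:ℝ) ≤ (s-1)/x := div_nonneg (by linarith) hx0.le; linarith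
    calc (1 + (s - 1) / x) * ((x - 1) / x) ^ (s - 1)
        ≤ Real.exp ((s - 1) / x) * Real.exp (-((s - 1) / x)) :=
          mul_le_mul h1 h2 hwp.le (Real.exp_pos _).le
      _ = 1 := by rw [← Real.exp_add]; simp
  have h3 : 1 + (s - 1) / x ≤ 1 / ((x - 1) / x) ^ (s - 1) := (le_div_iff₀ hwp).mpr key
  have h4 : x ^ (1 - s) * (1 + (s - 1) / x) ≤ (x - 1) ^ (1 - s) := by
    have hxp : (0:ℝ) < x ^ (1 - s) := Real.rpow_pos_of_pos hx0 _
    have hxw : (x - 1) ^ (1 - s) = x ^ (1 - s) * ((x - 1) / x) ^ (1 - s) := by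
      rw [← Real.mul_rpow hx0.le hw.le]
      congr 1
      field_simp
    rw [hxw]
    apply mul_le_mul_of_nonneg_left _ hxp.le
    rw [show (1 - s) = -(s - 1) by ring, Real.rpow_neg hw.le, ← one_div]
    exact h3
  have e : x ^ (-s) = x ^ (1 - s) / x := by
    rw [show -s = (1 - s) - 1 by ring, Real.rpow_sub hx0, Real.rpow_one]
  have e2 : x ^ (1 - s) * (1 + (s - 1) / x) = x ^ (1 - s) + (s - 1) * x ^ (-s) := by
    rw [e]; field_simp
  linarith [h4, e2.symm.le, e2.le]

lemma tail_sum_aux {s : ℝ} (hs : 1 < s) (a b : ℕ) (ha : 2 ≤ a) :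
    ∑ m ∈ Finset.Icc a b, (m : ℝ) ^ (-s) ≤ ((a : ℝ) - 1) ^ (1 - s) / (s - 1) := by
  have hs0 : (0:ℝ) < s - 1 := by linarith
  set g : ℕ → ℝ := fun m => (m : ℝ) ^ (1 - s) / (s - 1) with hg
  have hgnn : ∀ m, 0 ≤ g m := fun m => div_nonneg (Real.rpow_nonneg (Nat.cast_nonneg m) _) hs0.le
  have step : ∀ m ∈ Finset.Icc a b, (m : ℝ) ^ (-s) ≤ g (m - 1) - g m := by
    intro m hm
    have h2m : 2 ≤ m := le_trans ha (Finset.mem_Icc.mp hm).1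
    have hx : (1:ℝ) < m := by exact_mod_cast h2m.trans_lt' one_lt_two
    have hcast : ((m - 1 : ℕ) : ℝ) = (m : ℝ) - 1 := by
      have h1 : 1 ≤ m := by omega
      rw [Nat.cast_sub h1, Nat.cast_one]
    have hb := bern_aux hs hx
    have hgexp : g (m - 1) - g m = (((m:ℝ) - 1) ^ (1 - s) - (m:ℝ) ^ (1 - s)) / (s - 1) := by
      rw [hg]; simp only [hcast]; ring
    rw [hgexp, le_div_iff₀ hs0]
    nlinarith [hb]
  calc ∑ m ∈ Finset.Icc a b, (m : ℝ) ^ (-s)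
      ≤ ∑ m ∈ Finset.Icc a b, (g (m - 1) - g m) := Finset.sum_le_sum step
    _ ≤ g (a - 1) := by
        rcases lt_or_ge b a with h | h
        · rw [Finset.Icc_eq_empty_of_lt h, Finset.sum_empty]; exact hgnn _
        · rw [← Finset.Ico_add_one_right_eq_Icc, Finset.sum_Ico_eq_sum_range]
          have hre : ∀ i, g (a + i - 1) - g (a + i) =
              g (a - 1 + i) - g (a - 1 + (i + 1)) := by
            intro i
            congr 2 <;> omega
          rw [Finset.sum_congr rfl (fun i _ => hre i),
            Finset.sum_range_sub' (fun i => g (a - 1 + i))]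
          have := hgnn (a - 1 + (b + 1 - a))
          simp only [add_zero]
          linarith
    _ = ((a : ℝ) - 1) ^ (1 - s) / (s - 1) := by
        rw [hg]
        have h1 : 1 ≤ a := by omega
        have : ((a - 1 : ℕ) : ℝ) = (a : ℝ) - 1 := by rw [Nat.cast_sub h1, Nat.cast_one]
        simp only [this]
set_option maxHeartbeats 1000000 in
theorem packing_cover_log_ratio (α δ : ℝ) (hα : 1 < α)
    (hδ0 : 0 < δ) (hδ : δ < min (1 / 3) ((α - 1) / (α + 1)))
    (r p : ℕ → ℝ) (hr : ∀ k, 0 < r k) (hp : ∀ k, 0 < p k)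
    (hrup : ∀ᶠ k : ℕ in atTop, r k ≤ (k : ℝ) ^ (-(α - δ)))
    (hplow : ∀ᶠ k : ℕ in atTop, p k ≥ (k : ℝ) ^ (-(1 + δ))) :
    ∀ η : ℝ, 0 < η → η < 1 / 2 → ∃ k₀ : ℕ, ∀ k ≥ k₀, ∀ n : ℕ,
      Real.log (∑ m ∈ Finset.Icc k (n + k), p m) /
        Real.log (∑ m ∈ Finset.Icc (k - 1) (n + k + 1), r m) ≤
      (1 + δ) / (α - δ) + η := by
  intro η hη0 hη2
  have hδ3 : δ < 1/3 := lt_of_lt_of_le hδ (min_le_left _ _)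
  have hδα : δ < (α - 1) / (α + 1) := lt_of_lt_of_le hδ (min_le_right _ _)
  set s : ℝ := α - δ with hsdef
  clear_value s
  have hs1δ : 1 + δ < s := by
    have hα1 : (0:ℝ) < α + 1 := by linarith
    have h1 : δ * (α + 1) < α - 1 := (lt_div_iff₀ hα1).mp hδα
    rw [hsdef]; nlinarith
  have hs1 : 1 < s := by linarith
  have hs0 : (0:ℝ) < s := by linarith
  set t : ℝ := (1 + δ) / s + η with htdef
  clear_value t
  have hts : t * s = (1 + δ) + η * s := by
    rw [htdef, add_mul, div_mul_cancel₀ _ (ne_of_gt hs0)]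
  have htlt : (1 + δ) / s < 1 := (div_lt_one hs0).mpr (by linarith)
  have ht1 : t - 1 ≤ η := by rw [htdef]; linarith
  have ht0 : 0 < t := by
    have h : 0 < (1 + δ) / s := div_pos (by linarith) hs0
    rw [htdef]; linarith
  have ht2 : t ≤ 2 := by rw [htdef]; linarith
  have htsδ : δ < t * (s - 1) := by
    have h1 : δ * s < (1 + δ) * (s - 1) := by nlinarith
    have h2 : δ < (1 + δ) / s * (s - 1) := by
      rw [div_mul_eq_mul_div, lt_div_iff₀ hs0]; linarith
    have h3 : t * (s - 1) = (1 + δ) / s * (s - 1) + η * (s - 1) := by rw [htdef]; ring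
    nlinarith [mul_pos hη0 (show (0:ℝ) < s - 1 by linarith)]
  have l2 : (0:ℝ) ≤ Real.log 2 := Real.log_nonneg (by norm_num)
  have l3 : (0:ℝ) ≤ Real.log 3 := Real.log_nonneg (by norm_num)
  have l4 : (0:ℝ) ≤ Real.log 4 := Real.log_nonneg (by norm_num)
  have l9 : Real.log 9 = Real.log 3 + Real.log 3 := by
    rw [show (9:ℝ) = 3 * 3 by norm_num, Real.log_mul (by norm_num) (by norm_num)]
  have l9p : (0:ℝ) < Real.log 9 := Real.log_pos (by norm_num)
  rw [eventually_atTop] at hrup hplow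
  obtain ⟨N₁, hN₁⟩ := hrup
  obtain ⟨N₂, hN₂⟩ := hplow
  have hcast1 : Tendsto (fun k : ℕ => (k:ℝ) - 1) atTop atTop := by
    have h := tendsto_atTop_add_const_right atTop (-1 : ℝ) tendsto_natCast_atTop_atTop
    simpa [sub_eq_add_neg] using h
  have hcast2 : Tendsto (fun k : ℕ => (k:ℝ) - 2) atTop atTop := by
    have h := tendsto_atTop_add_const_right atTop (-2 : ℝ) tendsto_natCast_atTop_atTop
    simpa [sub_eq_add_neg] using h
  have hlog1 : Tendsto (fun k : ℕ => Real.log ((k:ℝ) - 1)) atTop atTop :=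
    Real.tendsto_log_atTop.comp hcast1
  have hlog2 : Tendsto (fun k : ℕ => Real.log ((k:ℝ) - 2)) atTop atTop :=
    Real.tendsto_log_atTop.comp hcast2
  have ev1 : ∀ᶠ k : ℕ in atTop,
      (1 + δ) * Real.log 4 + Real.log 2 + Real.log 9 ≤ η * (s - 1) * Real.log ((k:ℝ) - 1) :=
    (hlog1.const_mul_atTop (mul_pos hη0 (by linarith : (0:ℝ) < s - 1))).eventually_ge_atTop _
  have ev2 : ∀ᶠ k : ℕ in atTop,
      δ * Real.log 3 + Real.log 4 - t * Real.log (s - 1) ≤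
        (t * (s - 1) - δ) * Real.log ((k:ℝ) - 2) :=
    (hlog2.const_mul_atTop (by linarith : (0:ℝ) < t * (s - 1) - δ)).eventually_ge_atTop _
  have hev := (ev1.and (ev2.and (eventually_ge_atTop (N₁ + N₂ + 4))))
  rw [eventually_atTop] at hev
  obtain ⟨k₀, hk₀⟩ := hev
  refine ⟨k₀, fun k hk n => ?_⟩
  obtain ⟨hc1, hc2, hkN⟩ := hk₀ k hk
  have hk4 : 4 ≤ k := by omega
  have hkR : (4:ℝ) ≤ (k:ℝ) := by exact_mod_cast hk4
  have hk1c : ((k - 1 : ℕ) : ℝ) = (k:ℝ) - 1 := by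
    rw [Nat.cast_sub (by omega : 1 ≤ k), Nat.cast_one]
  set Lk1 : ℝ := Real.log ((k:ℝ) - 1) with hLk1
  set Lk2 : ℝ := Real.log ((k:ℝ) - 2) with hLk2
  set Lk : ℝ := Real.log (k:ℝ) with hLk
  have r5 : 0 ≤ Lk1 := Real.log_nonneg (by linarith)
  have r6 : 0 ≤ Lk2 := Real.log_nonneg (by linarith)
  have r7 : 0 ≤ Lk := Real.log_nonneg (by linarith)
  clear_value Lk1 Lk2 Lk
  set A : ℝ := ∑ m ∈ Finset.Icc k (n + k), p m with hA
  set B : ℝ := ∑ m ∈ Finset.Icc (k - 1) (n + k + 1), r m with hB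
  have hA0 : 0 < A :=
    Finset.sum_pos (fun i _ => hp i) ⟨k, Finset.mem_Icc.mpr ⟨by omega, by omega⟩⟩
  have hB0 : 0 < B :=
    Finset.sum_pos (fun i _ => hr i) ⟨k - 1, Finset.mem_Icc.mpr ⟨by omega, by omega⟩⟩
  clear_value A B
  suffices h : Real.log B < 0 ∧ t * Real.log B ≤ Real.log A by
    rw [div_le_iff_of_neg h.1]
    exact h.2
  rcases lt_or_ge n k with hnk | hnk
  · -- Case 1 : n < k
    have hAcard : (Finset.Icc k (n + k)).card = n + 1 := by rw [Nat.card_Icc]; omega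
    have hAlb : ((n + 1 : ℕ) : ℝ) * ((n + k : ℕ) : ℝ) ^ (-(1 + δ)) ≤ A := by
      rw [hA]
      have h := Finset.card_nsmul_le_sum (Finset.Icc k (n + k)) p
        (((n + k : ℕ) : ℝ) ^ (-(1 + δ))) ?_
      · rwa [hAcard, nsmul_eq_mul] at h
      · intro m hm
        obtain ⟨hm1, hm2⟩ := Finset.mem_Icc.mp hm
        have h1 : ((n + k : ℕ) : ℝ) ^ (-(1 + δ)) ≤ (m : ℝ) ^ (-(1 + δ)) :=
          Real.rpow_le_rpow_of_nonpos (Nat.cast_pos.mpr (by omega) : (0:ℝ) < (m:ℝ))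
            (by exact_mod_cast hm2) (by linarith)
        exact le_trans h1 (hN₂ m (by omega))
    have hlogA : Real.log ((n + 1 : ℕ) : ℝ) + (-(1 + δ)) * Real.log ((n + k : ℕ) : ℝ)
        ≤ Real.log A := by
      have hpos1 : (0:ℝ) < ((n + 1 : ℕ) : ℝ) := Nat.cast_pos.mpr (by omega)
      have hpos2 : (0:ℝ) < ((n + k : ℕ) : ℝ) := Nat.cast_pos.mpr (by omega)
      have h := Real.log_le_log (by positivity) hAlb
      rwa [Real.log_mul (ne_of_gt hpos1) (ne_of_gt (Real.rpow_pos_of_pos hpos2 _)),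
        Real.log_rpow hpos2] at h
    have hBcard : (Finset.Icc (k - 1) (n + k + 1)).card = n + 3 := by
      rw [Nat.card_Icc]; omega
    have hk1pos : (0:ℝ) < ((k - 1 : ℕ) : ℝ) := by rw [hk1c]; linarith
    have hBub : B ≤ ((n + 3 : ℕ) : ℝ) * ((k - 1 : ℕ) : ℝ) ^ (-s) := by
      rw [hB]
      have h := Finset.sum_le_card_nsmul (Finset.Icc (k - 1) (n + k + 1)) r
        (((k - 1 : ℕ) : ℝ) ^ (-s)) ?_
      · rwa [hBcard, nsmul_eq_mul] at h
      · intro m hm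
        obtain ⟨hm1, hm2⟩ := Finset.mem_Icc.mp hm
        refine le_trans (hN₁ m (by omega)) ?_
        exact Real.rpow_le_rpow_of_nonpos hk1pos (by exact_mod_cast hm1) (by linarith)
    have hlogB : Real.log B ≤ Real.log ((n + 3 : ℕ) : ℝ) + (-s) * Lk1 := by
      have hpos3 : (0:ℝ) < ((n + 3 : ℕ) : ℝ) := Nat.cast_pos.mpr (by omega)
      have h := Real.log_le_log hB0 hBub
      rwa [Real.log_mul (ne_of_gt hpos3) (ne_of_gt (Real.rpow_pos_of_pos hk1pos _)),
        Real.log_rpow hk1pos, hk1c, ← hLk1] at h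
    set Ln1 : ℝ := Real.log ((n + 1 : ℕ) : ℝ) with hLn1
    set Ln3 : ℝ := Real.log ((n + 3 : ℕ) : ℝ) with hLn3
    set Lnk : ℝ := Real.log ((n + k : ℕ) : ℝ) with hLnk
    have r4 : 0 ≤ Ln1 := Real.log_nonneg (Nat.one_le_cast.mpr (by omega))
    clear_value Ln1 Ln3 Lnk
    have r1 : Ln3 ≤ Ln1 + Real.log 3 := by
      rw [hLn3, hLn1]
      calc Real.log ((n + 3 : ℕ) : ℝ) ≤ Real.log (((n + 1 : ℕ) : ℝ) * 3) := by
            apply Real.log_le_log (Nat.cast_pos.mpr (by omega))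
            push_cast; linarith
        _ = Real.log ((n + 1 : ℕ) : ℝ) + Real.log 3 :=
            Real.log_mul (ne_of_gt (Nat.cast_pos.mpr (by omega))) (by norm_num)
    have r2 : Ln1 ≤ Lk1 + Real.log 2 := by
      rw [hLn1, hLk1]
      calc Real.log ((n + 1 : ℕ) : ℝ) ≤ Real.log (((k:ℝ) - 1) * 2) := by
            apply Real.log_le_log (Nat.cast_pos.mpr (by omega))
            have h : (n:ℝ) + 1 ≤ (k:ℝ) := by exact_mod_cast hnk
            push_cast; linarith
        _ = Real.log ((k:ℝ) - 1) + Real.log 2 :=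
            Real.log_mul (by linarith) (by norm_num)
    have r3 : Lnk ≤ Lk1 + Real.log 4 := by
      rw [hLnk, hLk1]
      calc Real.log ((n + k : ℕ) : ℝ) ≤ Real.log (((k:ℝ) - 1) * 4) := by
            apply Real.log_le_log (Nat.cast_pos.mpr (by omega))
            have h : (n:ℝ) ≤ (k:ℝ) := by exact_mod_cast hnk.le
            push_cast; linarith
        _ = Real.log ((k:ℝ) - 1) + Real.log 4 :=
            Real.log_mul (by linarith) (by norm_num)
    have a1 : t * Ln3 ≤ t * Ln1 + t * Real.log 3 := by
      have h := mul_le_mul_of_nonneg_left r1 ht0.le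
      have e : t * (Ln1 + Real.log 3) = t * Ln1 + t * Real.log 3 := by ring
      linarith
    have a2 : t * Ln1 ≤ Ln1 + η * Ln1 := by
      have h := mul_le_mul_of_nonneg_right ht1 r4
      have e : (t - 1) * Ln1 = t * Ln1 - Ln1 := by ring
      linarith
    have a3 : η * Ln1 ≤ η * Lk1 + η * Real.log 2 := by
      have h := mul_le_mul_of_nonneg_left r2 hη0.le
      have e : η * (Lk1 + Real.log 2) = η * Lk1 + η * Real.log 2 := by ring
      linarith
    have a4 : t * Real.log 3 ≤ Real.log 9 := by
      have h := mul_le_mul_of_nonneg_right ht2 l3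
      linarith [l9]
    have a5 : (1 + δ) * Lnk ≤ (1 + δ) * Lk1 + (1 + δ) * Real.log 4 := by
      have h := mul_le_mul_of_nonneg_left r3 (by linarith : (0:ℝ) ≤ 1 + δ)
      have e : (1 + δ) * (Lk1 + Real.log 4) = (1 + δ) * Lk1 + (1 + δ) * Real.log 4 := by ring
      linarith
    have a6 : t * (s * Lk1) = (1 + δ) * Lk1 + η * Lk1 + η * (s - 1) * Lk1 := by
      calc t * (s * Lk1) = (t * s) * Lk1 := by ring
        _ = ((1 + δ) + η * s) * Lk1 := by rw [hts]
        _ = (1 + δ) * Lk1 + η * Lk1 + η * (s - 1) * Lk1 := by ring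
    have b1 : η * Real.log 2 ≤ Real.log 2 := by
      have h := mul_le_mul_of_nonneg_right (show η ≤ 1 by linarith) l2
      rw [one_mul] at h; exact h
    have b2 : 0 ≤ (1 + δ) * Real.log 4 :=
      mul_nonneg (by linarith) l4
    have hsLk1 : 2 * ((1 + δ) * Real.log 4 + Real.log 2 + Real.log 9) ≤ (s - 1) * Lk1 := by
      have hX : 0 ≤ (s - 1) * Lk1 := mul_nonneg (by linarith) r5
      have h1 : η * ((s - 1) * Lk1) ≤ (1/2) * ((s - 1) * Lk1) :=
        mul_le_mul_of_nonneg_right (by linarith) hX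
      have e : η * (s - 1) * Lk1 = η * ((s - 1) * Lk1) := by ring
      linarith [hc1]
    constructor
    · -- log B < 0
      have e : s * Lk1 = (s - 1) * Lk1 + Lk1 := by ring
      linarith [hlogB, r1, r2, hsLk1, l9p, l9, b2]
    · -- t * log B ≤ log A
      have m0 : t * Real.log B ≤ t * (Ln3 + (-s) * Lk1) :=
        mul_le_mul_of_nonneg_left hlogB ht0.le
      have e0 : t * (Ln3 + (-s) * Lk1) = t * Ln3 - t * (s * Lk1) := by ring
      linarith [hc1, a1, a2, a3, a4, a5, a6, b1, hlogA, m0, e0]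
  · -- Case 2 : k ≤ n
    have hk1ge : 2 ≤ k - 1 := by omega
    have hBub : B ≤ ((k:ℝ) - 2) ^ (1 - s) / (s - 1) := by
      rw [hB]
      calc (∑ m ∈ Finset.Icc (k - 1) (n + k + 1), r m)
          ≤ ∑ m ∈ Finset.Icc (k - 1) (n + k + 1), (m : ℝ) ^ (-s) :=
            Finset.sum_le_sum (fun m hm => hN₁ m (by
              obtain ⟨hm1, hm2⟩ := Finset.mem_Icc.mp hm; omega))
        _ ≤ (((k - 1 : ℕ) : ℝ) - 1) ^ (1 - s) / (s - 1) := tail_sum_aux hs1 _ _ hk1ge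
        _ = ((k:ℝ) - 2) ^ (1 - s) / (s - 1) := by
            rw [hk1c, show (k:ℝ) - 1 - 1 = (k:ℝ) - 2 from by ring]
    have hk2pos : (0:ℝ) < (k:ℝ) - 2 := by linarith
    have hs1' : (0:ℝ) < s - 1 := by linarith
    have hlogB : Real.log B ≤ (1 - s) * Lk2 - Real.log (s - 1) := by
      have h := Real.log_le_log hB0 hBub
      rwa [Real.log_div (ne_of_gt (Real.rpow_pos_of_pos hk2pos _)) (ne_of_gt hs1'),
        Real.log_rpow hk2pos, ← hLk2] at h
    have hsub : Finset.Icc k (2 * k) ⊆ Finset.Icc k (n + k) :=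
      Finset.Icc_subset_Icc (le_refl k) (by omega)
    have hstep1 : ∑ m ∈ Finset.Icc k (2 * k), p m ≤ A := by
      rw [hA]
      exact Finset.sum_le_sum_of_subset_of_nonneg hsub (fun i _ _ => (hp i).le)
    have h2kpos : (0:ℝ) < ((2 * k : ℕ) : ℝ) := Nat.cast_pos.mpr (by omega)
    have hstep2 : ((k + 1 : ℕ) : ℝ) * ((2 * k : ℕ) : ℝ) ^ (-(1 + δ)) ≤
        ∑ m ∈ Finset.Icc k (2 * k), p m := by
      have h := Finset.card_nsmul_le_sum (Finset.Icc k (2 * k)) p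
        (((2 * k : ℕ) : ℝ) ^ (-(1 + δ))) ?_
      · have hcard : (Finset.Icc k (2 * k)).card = k + 1 := by rw [Nat.card_Icc]; omega
        rwa [hcard, nsmul_eq_mul] at h
      · intro m hm
        obtain ⟨hm1, hm2⟩ := Finset.mem_Icc.mp hm
        have h1 : ((2 * k : ℕ) : ℝ) ^ (-(1 + δ)) ≤ (m : ℝ) ^ (-(1 + δ)) :=
          Real.rpow_le_rpow_of_nonpos (Nat.cast_pos.mpr (by omega) : (0:ℝ) < (m:ℝ))
            (by exact_mod_cast hm2) (by linarith)
        exact le_trans h1 (hN₂ m (by omega))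
    have hkne : (k:ℝ) ≠ 0 := by positivity
    have hAlb : (1/4 : ℝ) * (k:ℝ) ^ (-δ) ≤ A := by
      have hc2k : ((2 * k : ℕ) : ℝ) = 2 * (k:ℝ) := by push_cast; ring
      have hmulr : ((2 : ℝ) * (k:ℝ)) ^ (-(1 + δ)) =
          (2:ℝ) ^ (-(1 + δ)) * (k:ℝ) ^ (-(1 + δ)) :=
        Real.mul_rpow (by norm_num) (by positivity)
      have hf1 : (1/4 : ℝ) ≤ (2:ℝ) ^ (-(1 + δ)) := by
        have h := Real.rpow_le_rpow_of_exponent_le (by norm_num : (1:ℝ) ≤ 2)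
          (by linarith : (-2 : ℝ) ≤ -(1 + δ))
        have h2 : (2:ℝ) ^ (-2 : ℝ) = 1/4 := by
          rw [show (-2 : ℝ) = ((-2 : ℤ) : ℝ) by norm_num, Real.rpow_intCast]
          norm_num
        calc (1/4 : ℝ) = (2:ℝ) ^ (-2 : ℝ) := h2.symm
          _ ≤ (2:ℝ) ^ (-(1 + δ)) := h
      have hf2 : (k:ℝ) * ((2:ℝ) ^ (-(1 + δ)) * (k:ℝ) ^ (-(1 + δ))) =
          (2:ℝ) ^ (-(1 + δ)) * (k:ℝ) ^ (-δ) := by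
        rw [show (-δ : ℝ) = -(1 + δ) + 1 by ring, Real.rpow_add_one hkne]
        ring
      have hf3 : (k:ℝ) ≤ ((k + 1 : ℕ) : ℝ) := by push_cast; linarith
      have hf4 : (0:ℝ) ≤ (k:ℝ) ^ (-δ) := Real.rpow_nonneg (by positivity) _
      have hf5 : (0:ℝ) ≤ (2:ℝ) ^ (-(1 + δ)) * (k:ℝ) ^ (-(1 + δ)) := by positivity
      calc (1/4 : ℝ) * (k:ℝ) ^ (-δ)
          ≤ (2:ℝ) ^ (-(1 + δ)) * (k:ℝ) ^ (-δ) := mul_le_mul_of_nonneg_right hf1 hf4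
        _ = (k:ℝ) * ((2:ℝ) ^ (-(1 + δ)) * (k:ℝ) ^ (-(1 + δ))) := hf2.symm
        _ ≤ ((k + 1 : ℕ) : ℝ) * ((2:ℝ) ^ (-(1 + δ)) * (k:ℝ) ^ (-(1 + δ))) :=
            mul_le_mul_of_nonneg_right hf3 hf5
        _ = ((k + 1 : ℕ) : ℝ) * ((2 * k : ℕ) : ℝ) ^ (-(1 + δ)) := by rw [hc2k, hmulr]
        _ ≤ ∑ m ∈ Finset.Icc k (2 * k), p m := hstep2
        _ ≤ A := hstep1
    have hlogA : -Real.log 4 - δ * Lk ≤ Real.log A := by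
      have hkpos : (0:ℝ) < (k:ℝ) := by linarith
      have h := Real.log_le_log (by positivity) hAlb
      rw [Real.log_mul (by norm_num) (ne_of_gt (Real.rpow_pos_of_pos hkpos _)),
        Real.log_rpow hkpos, show (1/4 : ℝ) = 4⁻¹ by norm_num, Real.log_inv, ← hLk] at h
      linarith
    have c1 : δ * Lk ≤ δ * Lk2 + δ * Real.log 3 := by
      have hk3 : Lk ≤ Lk2 + Real.log 3 := by
        rw [hLk, hLk2]
        calc Real.log (k:ℝ) ≤ Real.log (((k:ℝ) - 2) * 3) := by
              apply Real.log_le_log (by linarith); linarith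
          _ = Real.log ((k:ℝ) - 2) + Real.log 3 :=
              Real.log_mul (by linarith) (by norm_num)
      have h := mul_le_mul_of_nonneg_left hk3 hδ0.le
      have e : δ * (Lk2 + Real.log 3) = δ * Lk2 + δ * Real.log 3 := by ring
      linarith
    have e2 : t * ((s - 1) * Lk2 + Real.log (s - 1)) =
        (t * (s - 1) - δ) * Lk2 + δ * Lk2 + t * Real.log (s - 1) := by ring
    have hδLk2 : 0 ≤ δ * Lk2 := mul_nonneg hδ0.le r6
    have hδl3 : 0 ≤ δ * Real.log 3 := mul_nonneg hδ0.le l3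
    have hXpos : 0 < (s - 1) * Lk2 + Real.log (s - 1) := by
      have htX : Real.log 4 ≤ t * ((s - 1) * Lk2 + Real.log (s - 1)) := by
        rw [e2]; linarith [hc2]
      by_contra hcon
      push_neg at hcon
      have h := mul_nonpos_of_nonneg_of_nonpos ht0.le hcon
      have hl4 : (0:ℝ) < Real.log 4 := Real.log_pos (by norm_num)
      linarith
    constructor
    · have e3 : (1 - s) * Lk2 - Real.log (s - 1) =
          -((s - 1) * Lk2 + Real.log (s - 1)) := by ring
      linarith [hlogB]
    · have m0 : t * Real.log B ≤ t * ((1 - s) * Lk2 - Real.log (s - 1)) :=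
        mul_le_mul_of_nonneg_left hlogB ht0.le
      have e4 : t * ((1 - s) * Lk2 - Real.log (s - 1)) =
          -((t * (s - 1) - δ) * Lk2) - δ * Lk2 - t * Real.log (s - 1) := by ring
      linarith [hlogA, c1, hc2, m0, e4]
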